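/- arXiv:1606.01036 — 3 statements merged into one kernel-verified Lean document; each statement's English description precedes it below -/
import Mathlib

section
/- Let V be a real inner product space, W ∈ V with W ≠ 0, set u = |W|, and let y ∈ V with ⟨y, W⟩ > 0, F = |y|²/(2⟨y, W⟩). Then the ship's through-water velocity e := y/F − W satisfies |e| = u and ⟨e + W, W⟩ > 0; conversely, for any e with |e| = u and e ≠ −W, the vector v := e + W satisfies ⟨v, W⟩ > 0 and v lies in the domain of F with F(v) = 1. -/
open scoped InnerProductSpace

theorem kropina_indicatrix_heading_correspondence
    {V : Type*} [NormedAddCommGroup V] [InnerProductSpace ℝ V]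
    (W : V) (hW : W ≠ 0) (u : ℝ) (hu : u = ‖W‖) :
    (∀ y : V, 0 < ⟪y, W⟫_ℝ →
      ∀ F : ℝ, F = ‖y‖ ^ 2 / (2 * ⟪y, W⟫_ℝ) →
        ‖F⁻¹ • y - W‖ = u ∧ 0 < ⟪(F⁻¹ • y - W) + W, W⟫_ℝ) ∧
    (∀ e : V, ‖e‖ = u → e ≠ -W →
      0 < ⟪e + W, W⟫_ℝ ∧ ‖e + W‖ ^ 2 / (2 * ⟪e + W, W⟫_ℝ) = 1) := by
  constructor
  · intro y hy F hF
    have hyne : y ≠ 0 := by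
      intro h; rw [h, inner_zero_left] at hy; exact lt_irrefl _ hy
    have hyn : 0 < ‖y‖ := norm_pos_iff.mpr hyne
    have hFpos : 0 < F := by
      rw [hF]; positivity
    have hkey : ‖y‖ ^ 2 = 2 * ⟪y, W⟫_ℝ * F := by
      rw [hF]; field_simp
    have hsq : ‖F⁻¹ • y - W‖ ^ 2 = ‖W‖ ^ 2 := by
      rw [norm_sub_sq_real, norm_smul, real_inner_smul_left]
      have : ‖F⁻¹‖ = F⁻¹ := by
        rw [Real.norm_eq_abs, abs_of_pos (inv_pos.mpr hFpos)]
      rw [this, mul_pow]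
      have hFne : F ≠ 0 := ne_of_gt hFpos
      field_simp
      nlinarith [hkey]
    constructor
    · rw [hu]
      nlinarith [norm_nonneg (F⁻¹ • y - W), norm_nonneg W, hsq]
    · rw [sub_add_cancel, real_inner_smul_left]
      exact mul_pos (inv_pos.mpr hFpos) hy
  · intro e he hne
    have hvne : e + W ≠ 0 := by
      intro h
      apply hne
      have : e = -W + (e + W) := by abel
      rw [this, h, add_zero]
    have hvpos : 0 < ‖e + W‖ ^ 2 := pow_pos (norm_pos_iff.mpr hvne) 2
    have hexp : ‖e + W‖ ^ 2 = 2 * ⟪e + W, W⟫_ℝ := by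
      rw [norm_add_sq_real, inner_add_left, real_inner_self_eq_norm_sq]
      have : ‖e‖ = ‖W‖ := by rw [he, hu]
      rw [this]; ring
    have hip : 0 < ⟪e + W, W⟫_ℝ := by linarith
    exact ⟨hip, by rw [hexp]; field_simp⟩
end

section
/- Let V be a real inner product space, W ∈ V with W ≠ 0. The function F(y) = |y|²/(2⟨y, W⟩) defined on H = {y : ⟨y, W⟩ > 0} is convex on H. -/
open scoped InnerProductSpace

theorem kropina_convex
    {V : Type*} [NormedAddCommGroup V] [InnerProductSpace ℝ V]
    (W : V) (hW : W ≠ 0) :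
    ConvexOn ℝ {y : V | 0 < ⟪y, W⟫_ℝ}
      (fun y => ‖y‖ ^ 2 / (2 * ⟪y, W⟫_ℝ)) := by
  constructor
  · intro x hx y hy a b ha hb hab
    simp only [Set.mem_setOf_eq] at *
    rw [inner_add_left, real_inner_smul_left, real_inner_smul_left]
    rcases ha.lt_or_eq with h | h
    · nlinarith
    · nlinarith
  · intro x hx y hy a b ha hb hab
    simp only [Set.mem_setOf_eq] at hx hy ⊢
    have hP : (0:ℝ) < ⟪a • x + b • y, W⟫_ℝ := by
      rw [inner_add_left, real_inner_smul_left, real_inner_smul_left]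
      rcases ha.lt_or_eq with h | h
      · nlinarith
      · nlinarith
    have key : 0 ≤ ⟪(⟪y,W⟫_ℝ) • x - (⟪x,W⟫_ℝ) • y, (⟪y,W⟫_ℝ) • x - (⟪x,W⟫_ℝ) • y⟫_ℝ :=
      real_inner_self_nonneg
    have hcomm : ⟪x, y⟫_ℝ = ⟪y, x⟫_ℝ := real_inner_comm y x
    rw [smul_eq_mul, smul_eq_mul, ← mul_div_assoc, ← mul_div_assoc, div_add_div _ _ (by positivity) (by positivity), div_le_div_iff₀ (by positivity) (by positivity)]
    simp only [← real_inner_self_eq_norm_sq, inner_add_left, inner_add_right,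
      real_inner_smul_left, real_inner_smul_right, inner_sub_left, inner_sub_right] at key ⊢
    nlinarith [sq_nonneg (a*b), mul_pos hx hy, mul_nonneg ha hb,
      mul_nonneg (mul_nonneg ha hb) key]
end

section
/- Let V be a real inner product space, W ∈ V with W ≠ 0, and y₁, y₂ ∈ V with ⟨y₁, W⟩ > 0 and ⟨y₂, W⟩ > 0. Then F(y₁ + y₂) ≤ F(y₁) + F(y₂), where F(y) = |y|²/(2⟨y, W⟩). -/
open scoped InnerProductSpace

theorem kropina_subadditive
    {V : Type*} [NormedAddCommGroup V] [InnerProductSpace ℝ V]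
    (W : V) (hW : W ≠ 0) (y₁ y₂ : V)
    (h₁ : 0 < ⟪y₁, W⟫_ℝ) (h₂ : 0 < ⟪y₂, W⟫_ℝ) :
    ‖y₁ + y₂‖ ^ 2 / (2 * ⟪y₁ + y₂, W⟫_ℝ) ≤
      ‖y₁‖ ^ 2 / (2 * ⟪y₁, W⟫_ℝ) + ‖y₂‖ ^ 2 / (2 * ⟪y₂, W⟫_ℝ) := by
  set a := ⟪y₁, W⟫_ℝ with ha
  set b := ⟪y₂, W⟫_ℝ with hb
  have hsum : ⟪y₁ + y₂, W⟫_ℝ = a + b := by rw [inner_add_left]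
  have hab : (0:ℝ) < a + b := by linarith
  have hnorm : ‖y₁ + y₂‖ ^ 2 = ‖y₁‖ ^ 2 + 2 * ⟪y₁, y₂⟫_ℝ + ‖y₂‖ ^ 2 := by
    rw [@norm_add_sq_real]
  have hcs : ⟪y₁, y₂⟫_ℝ ≤ ‖y₁‖ * ‖y₂‖ := real_inner_le_norm y₁ y₂
  have key : ‖y₁ + y₂‖ ^ 2 * (a * b) ≤
      (‖y₁‖ ^ 2 * b + ‖y₂‖ ^ 2 * a) * (a + b) := by
    have amgm : 2 * (‖y₁‖ * ‖y₂‖) * (a * b) ≤ ‖y₁‖ ^ 2 * b ^ 2 + ‖y₂‖ ^ 2 * a ^ 2 := by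
      nlinarith [sq_nonneg (‖y₁‖ * b - ‖y₂‖ * a)]
    nlinarith [mul_pos h₁ h₂]
  rw [hsum, div_add_div _ _ (by positivity) (by positivity),
    div_le_div_iff₀ (by positivity) (by positivity)]
  nlinarith [key]
end
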